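/- Let T ∈ ℕ, T ≥ 2, and ω = 2πm/T with m ∈ {1,…,T−1}. Then for every j ∈ ℤ, the weighted sum (1/T) Σ_{s=j}^{j+T−1} (j+T−s) sin(ω s) equals cos((2j−1)ω/2) / (2 sin(ω/2)). -/

import Mathlib

open Finset Real

/-- Closed form of the linearly weighted sum of a sampled sinusoid over one period. -/
theorem stmt_3 (T : ℕ) (hT : 2 ≤ T) (m : ℕ) (hm1 : 1 ≤ m) (hm2 : m ≤ T - 1) (j : ℤ) :
    (1 / (T : ℝ)) * ∑ i ∈ Finset.range T,
        ((T : ℝ) - i) * Real.sin (2 * Real.pi * m / T * ((j : ℝ) + i))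
      = Real.cos ((2 * (j : ℝ) - 1) * (2 * Real.pi * m / T) / 2)
          / (2 * Real.sin ((2 * Real.pi * m / T) / 2)) := by
  have hT0 : (0:ℝ) < T := by
    have : 0 < T := by omega
    exact_mod_cast this
  set ω : ℝ := 2 * Real.pi * m / T with hω
  set x : ℝ := ω * j with hx
  set s : ℝ := Real.sin (ω / 2) with hs
  have hm' : (m:ℝ) < T := by
    have : m < T := by omega
    exact_mod_cast this
  have hm0 : (0:ℝ) < m := by
    have : 0 < m := by omega
    exact_mod_cast this
  have hspos : 0 < s := by
    rw [hs]
    apply Real.sin_pos_of_pos_of_lt_pi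
    · rw [hω]; positivity
    · rw [hω]
      calc 2 * Real.pi * m / T / 2 = Real.pi * (m / T) := by ring
        _ < Real.pi * 1 := by
            apply mul_lt_mul_of_pos_left _ Real.pi_pos
            rw [div_lt_one hT0]; exact hm'
        _ = Real.pi := by ring
  have hsne : s ≠ 0 := ne_of_gt hspos
  have h2s : (2*s) ≠ 0 := by positivity
  have hωT : ω * T = (m:ℝ) * (2 * Real.pi) := by
    rw [hω]; field_simp
  have term1 : ∀ u : ℝ, 2 * s * Real.sin u = Real.cos (u - ω/2) - Real.cos (u + ω/2) := by
    intro u; rw [hs, Real.cos_sub, Real.cos_add]; ring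
  have term2 : ∀ u : ℝ, 2 * s * Real.cos u = Real.sin (u + ω/2) - Real.sin (u - ω/2) := by
    intro u; rw [hs, Real.sin_add, Real.sin_sub]; ring
  -- cosine full-period sum vanishes
  have key2 : (∑ i ∈ Finset.range T, Real.cos (x + ω/2 + ω * i)) * (2 * s) = 0 := by
    have hc : ∀ i ∈ Finset.range T, Real.cos (x + ω/2 + ω * i) * (2*s)
        = (fun n : ℕ => Real.sin (x + ω * n)) (i+1) - (fun n : ℕ => Real.sin (x + ω * n)) i := by
      intro i _
      simp only
      have h := term2 (x + ω/2 + ω * i)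
      have e1 : x + ω/2 + ω * i + ω/2 = x + ω * ((i:ℝ)+1) := by ring
      have e2 : x + ω/2 + ω * i - ω/2 = x + ω * i := by ring
      rw [e1, e2] at h
      push_cast
      linear_combination h
    calc (∑ i ∈ Finset.range T, Real.cos (x + ω/2 + ω * i)) * (2 * s)
        = ∑ i ∈ Finset.range T, Real.cos (x + ω/2 + ω * i) * (2*s) := Finset.sum_mul ..
      _ = ∑ i ∈ Finset.range T, ((fun n : ℕ => Real.sin (x + ω * n)) (i+1)
            - (fun n : ℕ => Real.sin (x + ω * n)) i) := Finset.sum_congr rfl hc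
      _ = (fun n : ℕ => Real.sin (x + ω * n)) T - (fun n : ℕ => Real.sin (x + ω * n)) 0 :=
          Finset.sum_range_sub (fun n : ℕ => Real.sin (x + ω * n)) T
      _ = 0 := by
          simp only
          rw [hωT, show x + (m:ℝ) * (2*Real.pi) = x + ((m:ℤ):ℝ) * (2*Real.pi) by push_cast; ring,
            Real.sin_add_int_mul_two_pi]
          simp
  have hzero : (∑ i ∈ Finset.range T, Real.cos (x + ω/2 + ω * i)) = 0 := by
    rcases mul_eq_zero.mp key2 with h | h
    · exact h
    · exact absurd h h2s
  -- main telescoping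
  have key1 : (∑ i ∈ Finset.range T, ((T : ℝ) - i) * Real.sin (x + ω * i)) * (2 * s)
      = (T:ℝ) * Real.cos (x - ω/2) - ∑ i ∈ Finset.range T, Real.cos (x + ω/2 + ω * i) := by
    have step : ∀ i ∈ Finset.range T, ((T : ℝ) - i) * Real.sin (x + ω * i) * (2*s)
        = ((fun n : ℕ => ((T:ℝ) - n) * Real.cos (x + ω * n - ω/2)) i
           - (fun n : ℕ => ((T:ℝ) - n) * Real.cos (x + ω * n - ω/2)) (i+1))
          - Real.cos (x + ω/2 + ω * i) := by
      intro i _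
      simp only
      have h1 := term1 (x + ω * i)
      have h2 : Real.cos (x + ω * ((i:ℝ)+1) - ω/2) = Real.cos (x + ω*i + ω/2) := by
        ring_nf
      have h3 : Real.cos (x + ω/2 + ω * i) = Real.cos (x + ω*i + ω/2) := by
        ring_nf
      push_cast
      rw [h2, h3]
      linear_combination ((T:ℝ) - i) * h1
    calc (∑ i ∈ Finset.range T, ((T : ℝ) - i) * Real.sin (x + ω * i)) * (2 * s)
        = ∑ i ∈ Finset.range T, ((T : ℝ) - i) * Real.sin (x + ω * i) * (2*s) :=
          Finset.sum_mul ..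
      _ = ∑ i ∈ Finset.range T, (((fun n : ℕ => ((T:ℝ) - n) * Real.cos (x + ω * n - ω/2)) i
            - (fun n : ℕ => ((T:ℝ) - n) * Real.cos (x + ω * n - ω/2)) (i+1))
            - Real.cos (x + ω/2 + ω * i)) := Finset.sum_congr rfl step
      _ = (∑ i ∈ Finset.range T, ((fun n : ℕ => ((T:ℝ) - n) * Real.cos (x + ω * n - ω/2)) i
            - (fun n : ℕ => ((T:ℝ) - n) * Real.cos (x + ω * n - ω/2)) (i+1)))
          - ∑ i ∈ Finset.range T, Real.cos (x + ω/2 + ω * i) := Finset.sum_sub_distrib ..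
      _ = ((fun n : ℕ => ((T:ℝ) - n) * Real.cos (x + ω * n - ω/2)) 0
            - (fun n : ℕ => ((T:ℝ) - n) * Real.cos (x + ω * n - ω/2)) T)
          - ∑ i ∈ Finset.range T, Real.cos (x + ω/2 + ω * i) := by
          rw [Finset.sum_range_sub']
      _ = (T:ℝ) * Real.cos (x - ω/2) - ∑ i ∈ Finset.range T, Real.cos (x + ω/2 + ω * i) := by
          simp only
          norm_num
  have hsum : (∑ i ∈ Finset.range T, ((T : ℝ) - i) * Real.sin (x + ω * i))
      = (T:ℝ) * Real.cos (x - ω/2) / (2*s) := by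
    rw [eq_div_iff h2s, key1, hzero]; ring
  have hrw : ∀ i ∈ Finset.range T, ((T : ℝ) - i) * Real.sin (ω * ((j : ℝ) + i))
      = ((T : ℝ) - i) * Real.sin (x + ω * i) := by
    intro i _
    rw [hx, mul_add]
  rw [Finset.sum_congr rfl hrw, hsum]
  have harg : x - ω/2 = (2 * (j:ℝ) - 1) * ω / 2 := by rw [hx]; ring
  rw [harg]
  field_simp
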